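/- Let Φ_d = I + τΦ and Ψ_d = τΨ with Φ = [[0,1],[−ω², −√2 ω]] and Ψ = [0, ω²]ᵀ for ω, τ > 0. If P ∈ R^{2×2} is a symmetric solution of the discrete Lyapunov equation Φ_d P Φ_dᵀ − P + σ Ψ_d Ψ_dᵀ = 0 (σ > 0), then its (1,1) entry equals P₁₁ = −τω · (τ²ω² − √2 τω + 2) / (τ³ω³ − 3√2 τ²ω² + 8τω − 4√2) · σ. -/

import Mathlib

open Matrix

/-- Let `Φ_d = I + τΦ` and `Ψ_d = τΨ` with `Φ = [[0,1],[-ω², -√2 ω]]` and `Ψ = [0, ω²]ᵀ` for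
`ω, τ > 0`. If `P` is a symmetric solution of the discrete Lyapunov equation
`Φ_d P Φ_dᵀ - P + σ Ψ_d Ψ_dᵀ = 0` with `σ > 0`, then its `(1,1)` entry equals
`P₁₁ = -τω (τ²ω² - √2 τω + 2)/(τ³ω³ - 3√2 τ²ω² + 8τω - 4√2) · σ`. -/
theorem butterworth_discrete_lyapunov_entry
    (ω τ σ : ℝ) (hω : 0 < ω) (hτ : 0 < τ) (hσ : 0 < σ)
    (Φ : Matrix (Fin 2) (Fin 2) ℝ) (hΦ : Φ = !![0, 1; -ω ^ 2, -Real.sqrt 2 * ω])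
    (Ψ : Matrix (Fin 2) (Fin 1) ℝ) (hΨ : Ψ = !![0; ω ^ 2])
    (Φd : Matrix (Fin 2) (Fin 2) ℝ) (hΦd : Φd = 1 + τ • Φ)
    (Ψd : Matrix (Fin 2) (Fin 1) ℝ) (hΨd : Ψd = τ • Ψ)
    (P : Matrix (Fin 2) (Fin 2) ℝ) (hPsymm : P.IsSymm)
    (hP : Φd * P * Φdᵀ - P + σ • (Ψd * Ψdᵀ) = 0) :
    P 0 0 = -(τ * ω) * ((τ * ω) ^ 2 - Real.sqrt 2 * (τ * ω) + 2) /
      ((τ * ω) ^ 3 - 3 * Real.sqrt 2 * (τ * ω) ^ 2 + 8 * (τ * ω) - 4 * Real.sqrt 2) * σ := by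
  subst hΦ hΨ hΦd hΨd
  set s := Real.sqrt 2 with hsdef
  have hs2 : s ^ 2 = 2 := Real.sq_sqrt (by norm_num)
  have hsym : P 1 0 = P 0 1 := by
    conv_lhs => rw [← hPsymm]
    rfl
  have e00 := congrFun (congrFun hP 0) 0
  have e01 := congrFun (congrFun hP 0) 1
  have e11 := congrFun (congrFun hP 1) 1
  simp [Matrix.mul_apply, Fin.sum_univ_two, Matrix.one_apply, Matrix.transpose_apply,
    Matrix.vecHead, Matrix.vecTail, Matrix.vecMul, dotProduct] at e00 e01 e11
  rw [hsym] at e00 e01 e11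
  have hka2 : τ ^ 2 * ω ^ 2 * P 0 0 + τ * P 0 1 * ((τ*ω)^2 - s*(τ*ω) + 2) = 0 := by
    linear_combination (-τ) * e01 + (1 - s*τ*ω) * e00
  have keyt : τ * (P 0 1 * ((τ*ω) * ((τ*ω)^3 - 3*s*(τ*ω)^2 + 8*(τ*ω) - 4*s)))
      = σ * τ^4 * ω^4 := by
    linear_combination (-τ^2) * e11 + (-τ^2*(τ*ω^2)) * e01
      + ((1 - s*τ*ω)^2 - 1 + (τ*ω)^2*(1 - s*τ*ω)) * e00
      + (-2*τ^3*ω^2*(P 0 1)) * hs2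
  have hD : (τ*ω)^3 - 3*s*(τ*ω)^2 + 8*(τ*ω) - 4*s ≠ 0 := by
    intro h
    rw [h] at keyt
    have h0 : σ * τ^4 * ω^4 = 0 := by linear_combination -keyt
    have : (0:ℝ) < σ * τ^4 * ω^4 := by positivity
    linarith
  have hfin : τ^2 * ω^2 * P 0 0 * ((τ*ω) * ((τ*ω)^3 - 3*s*(τ*ω)^2 + 8*(τ*ω) - 4*s))
      = -((τ*ω)^2 - s*(τ*ω) + 2) * (σ * τ^4 * ω^4) := by
    linear_combination ((τ*ω) * ((τ*ω)^3 - 3*s*(τ*ω)^2 + 8*(τ*ω) - 4*s)) * hka2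
      - ((τ*ω)^2 - s*(τ*ω) + 2) * keyt
  rw [div_mul_eq_mul_div, eq_div_iff hD]
  have h3 : (τ^3 * ω^3 : ℝ) ≠ 0 := by positivity
  apply mul_left_cancel₀ h3
  linear_combination hfin
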